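/- arXiv:1307.7534 — 3 statements merged into one kernel-verified Lean document; each statement's English description precedes it below -/
import Mathlib

section
/- Let B = [b_1,…,b_n] be a basis of a lattice L in ℝ^m with Gram–Schmidt orthogonalization b_1^*,…,b_n^*, and define the potential Pot(B) = ∏_{i=1}^n ‖b_i^*‖^{2(n−i+1)}. Then for 1 ≤ k ≤ ℓ ≤ n, Pot(σ_{k,ℓ} B) = Pot(B) · ∏_{i=k}^{ℓ} (‖π_i(b_ℓ)‖² / ‖π_i(b_i)‖²), where σ_{k,ℓ} B denotes the basis reordered by the deep-insertion permutation σ_{k,ℓ} and π_i is the orthogonal projection onto the orthogonal complement of span{b_1,…,b_{i−1}}. -/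
open Finset

/-- π_j : orthogonal projection onto the orthogonal complement of span{b_0,…,b_{j-1}}. -/
noncomputable def projPerp {n m : ℕ} (b : Fin n → EuclideanSpace ℝ (Fin m)) (j : ℕ)
    (x : EuclideanSpace ℝ (Fin m)) : EuclideanSpace ℝ (Fin m) :=
  x - (Submodule.orthogonalProjection (Submodule.span ℝ (b '' {i | (i : ℕ) < j})) x : EuclideanSpace ℝ (Fin m))

/-- The Gram–Schmidt vector b_i^* = π_i(b_i). -/
noncomputable def bstar {n m : ℕ} (b : Fin n → EuclideanSpace ℝ (Fin m)) (i : Fin n) :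
    EuclideanSpace ℝ (Fin m) :=
  projPerp b i.val (b i)

/-- The potential Pot(B) = ∏ ‖b_i^*‖^{2(n-i+1)} (1-based), i.e. ∏ ‖b_i^*‖^{2(n-i)} (0-based). -/
noncomputable def Pot {n m : ℕ} (b : Fin n → EuclideanSpace ℝ (Fin m)) : ℝ :=
  ∏ i : Fin n, ‖bstar b i‖ ^ (2 * (n - i.val))

/-- Gram–Schmidt coefficient μ_{i,j} = ⟨b_i, b_j^*⟩ / ⟨b_j^*, b_j^*⟩. -/
noncomputable def mu {n m : ℕ} (b : Fin n → EuclideanSpace ℝ (Fin m)) (i j : Fin n) : ℝ :=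
  (inner ℝ (b i) (bstar b j) : ℝ) / (inner ℝ (bstar b j) (bstar b j) : ℝ)

/-- Size-reduced: |μ_{i,j}| ≤ 1/2 for all j < i. -/
def SizeReduced {n m : ℕ} (b : Fin n → EuclideanSpace ℝ (Fin m)) : Prop :=
  ∀ i j : Fin n, j < i → |mu b i j| ≤ 1/2

/-- The deep-insertion reordering σ_{k,ℓ}B = [b_1,…,b_{k-1}, b_ℓ, b_k,…,b_{ℓ-1}, b_{ℓ+1},…,b_n]. -/
def insertFam {n : ℕ} {α : Type*} (b : Fin n → α) (k l : Fin n) : Fin n → α :=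
  fun i => if i.val < k.val ∨ l.val < i.val then b i
    else if i = k then b l
    else b ⟨i.val - 1, lt_of_le_of_lt (Nat.sub_le _ _) i.isLt⟩



section Aux

variable {m : ℕ}

noncomputable def pPerpS (s : Set (EuclideanSpace ℝ (Fin m)))
    (x : EuclideanSpace ℝ (Fin m)) : EuclideanSpace ℝ (Fin m) :=
  x - (Submodule.orthogonalProjection (Submodule.span ℝ s) x : EuclideanSpace ℝ (Fin m))

noncomputable def pPerp (c : ℕ → EuclideanSpace ℝ (Fin m)) (j : ℕ)
    (x : EuclideanSpace ℝ (Fin m)) : EuclideanSpace ℝ (Fin m) :=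
  pPerpS (c '' Set.Iio j) x

noncomputable def gramM (c : ℕ → EuclideanSpace ℝ (Fin m)) (t : ℕ) : Matrix (Fin t) (Fin t) ℝ :=
  fun i j => inner ℝ (c i) (c j)

lemma pPerp_congr {c d : ℕ → EuclideanSpace ℝ (Fin m)} {j : ℕ}
    (h : c '' Set.Iio j = d '' Set.Iio j) (x : EuclideanSpace ℝ (Fin m)) :
    pPerp c j x = pPerp d j x := by
  unfold pPerp; rw [h]

/-- value function of the cyclic permutation -/
def cv (k l i : ℕ) : ℕ := if i < k then i else if i = k then l else if i ≤ l then i - 1 else i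

def cvInv (k l i : ℕ) : ℕ := if i < k then i else if i = l then k else if i < l then i + 1 else i

lemma cv_lt {k l t i : ℕ} (hk : k ≤ l) (hl : l < t) (hi : i < t) : cv k l i < t := by
  unfold cv; split_ifs <;> omega

lemma cvInv_lt {k l t i : ℕ} (hk : k ≤ l) (hl : l < t) (hi : i < t) : cvInv k l i < t := by
  unfold cvInv; split_ifs <;> omega

/-- The cyclic "deep insertion" permutation of `Fin t`. -/
def cycPerm (k l t : ℕ) (hk : k ≤ l) (hl : l < t) : Equiv.Perm (Fin t) where
  toFun i := ⟨cv k l i.val, cv_lt hk hl i.isLt⟩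
  invFun i := ⟨cvInv k l i.val, cvInv_lt hk hl i.isLt⟩
  left_inv i := Fin.ext (show cvInv k l (cv k l i.val) = i.val by
    have := i.isLt; unfold cv cvInv; split_ifs <;> omega)
  right_inv i := Fin.ext (show cv k l (cvInv k l i.val) = i.val by
    have := i.isLt; unfold cv cvInv; split_ifs <;> omega)

lemma cycPerm_val {k l t : ℕ} (hk : k ≤ l) (hl : l < t) (i : Fin t) :
    (cycPerm k l t hk hl i).val = cv k l i.val := rfl

lemma cycPerm_lt {k l t : ℕ} (hk : k ≤ l) (hl : l < t) (i : Fin t) (h : i.val < k) :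
    cycPerm k l t hk hl i = i := Fin.ext (by rw [cycPerm_val]; unfold cv; split_ifs <;> omega)

lemma cycPerm_eq {k l t : ℕ} (hk : k ≤ l) (hl : l < t) (i : Fin t) (h : i.val = k) :
    (cycPerm k l t hk hl i).val = l := by rw [cycPerm_val]; unfold cv; split_ifs <;> omega

lemma cycPerm_mid {k l t : ℕ} (hk : k ≤ l) (hl : l < t) (i : Fin t)
    (h1 : k < i.val) (h2 : i.val ≤ l) :
    (cycPerm k l t hk hl i).val = i.val - 1 := by
  rw [cycPerm_val]; unfold cv; split_ifs <;> omega

lemma cycPerm_gt {k l t : ℕ} (hk : k ≤ l) (hl : l < t) (i : Fin t) (h : l < i.val) :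
    cycPerm k l t hk hl i = i := Fin.ext (by rw [cycPerm_val]; unfold cv; split_ifs <;> omega)

lemma gramM_det_perm (c d : ℕ → EuclideanSpace ℝ (Fin m)) (t : ℕ) (σ : Equiv.Perm (Fin t))
    (h : ∀ i : Fin t, c i = d (σ i)) : (gramM c t).det = (gramM d t).det := by
  have : gramM c t = (gramM d t).submatrix σ σ := by
    ext i j; simp [gramM, Matrix.submatrix_apply, h]
  rw [this, Matrix.det_submatrix_equiv_self]

lemma pPerp_eq_zero_iff {s : Set (EuclideanSpace ℝ (Fin m))} {x : EuclideanSpace ℝ (Fin m)} :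
    pPerpS s x = 0 ↔ x ∈ Submodule.span ℝ s := by
  rw [pPerpS, sub_eq_zero, eq_comm, ← Submodule.starProjection_apply, Submodule.starProjection_eq_self_iff]

lemma pPerp_ne_zero {c : ℕ → EuclideanSpace ℝ (Fin m)} {T i : ℕ} (hi : i < T)
    (hLI : LinearIndependent ℝ (fun j : Fin T => c j.val)) : pPerp c i (c i) ≠ 0 := by
  intro h
  rw [pPerp, pPerp_eq_zero_iff] at h
  have himg : c '' Set.Iio i = (fun j : Fin T => c j.val) '' {j : Fin T | j.val < i} := by
    ext y
    constructor
    · rintro ⟨a, ha, rfl⟩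
      exact ⟨⟨a, lt_trans ha hi⟩, ha, rfl⟩
    · rintro ⟨a, ha, rfl⟩
      exact ⟨a.val, ha, rfl⟩
  rw [himg] at h
  exact hLI.notMem_span_image (x := ⟨i, hi⟩) (by simp) h

lemma gramM_det (c : ℕ → EuclideanSpace ℝ (Fin m)) :
    ∀ t : ℕ, LinearIndependent ℝ (fun i : Fin t => c i.val) →
      (gramM c t).det = ∏ i ∈ Finset.range t, ‖pPerp c i (c i)‖ ^ 2 := by
  intro t
  induction t with
  | zero => intro _; simp [gramM, Matrix.det_fin_zero]
  | succ t ih =>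
    intro hLI
    have hLIt : LinearIndependent ℝ (fun i : Fin t => c i.val) := by
      have h := hLI.comp (Fin.castSucc) (Fin.castSucc_injective t)
      simpa [Function.comp_def] using h
    have hdet := ih hLIt
    have hpos : (0:ℝ) < (gramM c t).det := by
      rw [hdet]
      apply Finset.prod_pos
      intro i hi
      rw [Finset.mem_range] at hi
      have hne : pPerp c i (c i) ≠ 0 := pPerp_ne_zero (T := t+1) (by omega) hLI
      exact pow_pos (norm_pos_iff.mpr hne) 2
    haveI : Invertible (gramM c t) :=
      (gramM c t).invertibleOfIsUnitDet (isUnit_iff_ne_zero.mpr (ne_of_gt hpos))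
    set A := gramM c t with hA
    set B : Matrix (Fin t) (Fin 1) ℝ := fun i _ => inner ℝ (c i.val) (c t) with hB
    set C : Matrix (Fin 1) (Fin t) ℝ := fun _ j => inner ℝ (c t) (c j.val) with hC
    set Dm : Matrix (Fin 1) (Fin 1) ℝ := fun _ _ => inner ℝ (c t) (c t) with hD
    have hentry : ∀ p q : Fin t ⊕ Fin 1, Matrix.fromBlocks A B C Dm p q =
        inner ℝ (c (finSumFinEquiv p).val) (c (finSumFinEquiv q).val) := by
      rintro (p | p) (q | q) <;>
        simp only [Matrix.fromBlocks_apply₁₁, Matrix.fromBlocks_apply₁₂,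
          Matrix.fromBlocks_apply₂₁, Matrix.fromBlocks_apply₂₂,
          finSumFinEquiv_apply_left, finSumFinEquiv_apply_right,
          Fin.coe_castAdd, Fin.coe_natAdd, Fin.val_eq_zero, add_zero, hA, hB, hC, hD, gramM, Matrix.fromBlocks, Matrix.of_apply,
          Sum.elim_inl, Sum.elim_inr]
    have hblocks : gramM c (t+1) =
        (Matrix.fromBlocks A B C Dm).submatrix finSumFinEquiv.symm finSumFinEquiv.symm := by
      ext i j
      rw [Matrix.submatrix_apply, hentry, Equiv.apply_symm_apply, Equiv.apply_symm_apply]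
      rfl
    -- analysis of the Schur complement
    set K := Submodule.span ℝ (c '' Set.Iio t) with hK
    set v : Fin t → ℝ := fun i => inner ℝ (c i.val) (c t) with hv
    set x : Fin t → ℝ := (⅟A).mulVec v with hx
    set q : EuclideanSpace ℝ (Fin m) := ∑ j : Fin t, x j • c j.val with hq
    have hAx : A.mulVec x = v := by
      rw [hx, Matrix.mulVec_mulVec, mul_invOf_self, Matrix.one_mulVec]
    have hq_inner : ∀ i : Fin t, (inner ℝ (c i.val) q : ℝ) = v i := by
      intro i
      have h1 : (inner ℝ (c i.val) q : ℝ) = ∑ j : Fin t, A i j * x j := by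
        rw [hq, inner_sum]
        refine Finset.sum_congr rfl fun j _ => ?_
        rw [real_inner_smul_right, mul_comm]
        rfl
      have h2 : ∑ j : Fin t, A i j * x j = A.mulVec x i := rfl
      rw [h1, h2, hAx]
    have hqK : q ∈ K :=
      Submodule.sum_mem _ fun j _ =>
        Submodule.smul_mem _ _ (Submodule.subset_span ⟨j.val, j.isLt, rfl⟩)
    have hle : K ≤ (Submodule.span ℝ {c t - q})ᗮ := by
      rw [hK, Submodule.span_le]
      rintro y ⟨a, ha, rfl⟩
      rw [SetLike.mem_coe, Submodule.mem_orthogonal_singleton_iff_inner_right]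
      rw [inner_sub_left, sub_eq_zero]
      rw [real_inner_comm]
      conv_rhs => rw [real_inner_comm]
      exact (hq_inner ⟨a, ha⟩).symm
    have hperp0 : ∀ w ∈ K, (inner ℝ (c t - q) w : ℝ) = 0 := fun w hw =>
      Submodule.mem_orthogonal_singleton_iff_inner_right.mp (hle hw)
    have hproj : (Submodule.orthogonalProjection K (c t) : EuclideanSpace ℝ (Fin m)) = q := by
      rw [← Submodule.starProjection_apply]
      exact Submodule.eq_starProjection_of_mem_of_inner_eq_zero hqK hperp0
    have hPerp_eq : pPerp c t (c t) = c t - q := by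
      show c t - (Submodule.orthogonalProjection K (c t) : EuclideanSpace ℝ (Fin m)) = c t - q
      rw [hproj]
    have hnorm : ‖pPerp c t (c t)‖ ^ 2 =
        (inner ℝ (c t) (c t) : ℝ) - ∑ j : Fin t, x j * v j := by
      rw [hPerp_eq, ← real_inner_self_eq_norm_sq]
      have h1 : (inner ℝ (c t - q) (c t - q) : ℝ) = inner ℝ (c t - q) (c t) - inner ℝ (c t - q) q := by
        rw [inner_sub_right]
      rw [h1, hperp0 q hqK, sub_zero, inner_sub_left]
      congr 1
      rw [hq, sum_inner]
      refine Finset.sum_congr rfl fun j _ => ?_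
      rw [real_inner_smul_left, hv]
    -- symmetry of ⅟A
    have hAT : A.transpose = A := by
      ext i j
      rw [Matrix.transpose_apply, hA]
      exact real_inner_comm _ _
    have hsym : ∀ i j, (⅟A) i j = (⅟A) j i := by
      intro i j
      rw [Matrix.invOf_eq_nonsing_inv]
      conv_lhs => rw [← hAT, ← Matrix.transpose_nonsing_inv, Matrix.transpose_apply]
    have hschur : (C * ⅟A * B) 0 0 = ∑ j : Fin t, x j * v j := by
      rw [Matrix.mul_apply]
      refine Finset.sum_congr rfl fun j _ => ?_
      have hxj : x j = ∑ i : Fin t, (⅟A) j i * v i := rfl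
      have hBj : B j 0 = v j := rfl
      rw [Matrix.mul_apply, hBj, hxj, Finset.sum_mul, Finset.sum_mul]
      refine Finset.sum_congr rfl fun i _ => ?_
      have hCi : C 0 i = inner ℝ (c t) (c i.val) := rfl
      have hvi : v i = inner ℝ (c i.val) (c t) := rfl
      rw [hCi, hvi, hsym i j, real_inner_comm]
      ring
    have hDm : Dm 0 0 = (inner ℝ (c t) (c t) : ℝ) := rfl
    rw [hblocks, Matrix.det_submatrix_equiv_self, Matrix.det_fromBlocks₁₁,
      Matrix.det_fin_one, Matrix.sub_apply, hschur, hDm, ← hnorm, hdet,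
      Finset.prod_range_succ]

lemma prod_pow_count (g : ℕ → ℝ) (n : ℕ) :
    ∏ j ∈ Finset.range n, ∏ i ∈ Finset.range (j+1), g i
      = ∏ i ∈ Finset.range n, g i ^ (n - i) := by
  induction n with
  | zero => simp
  | succ n ih =>
    rw [Finset.prod_range_succ, ih]
    have h1 : ∏ i ∈ Finset.range (n+1), g i ^ (n+1-i) =
        (∏ i ∈ Finset.range (n+1), g i ^ (n-i)) * ∏ i ∈ Finset.range (n+1), g i := by
      rw [← Finset.prod_mul_distrib]
      refine Finset.prod_congr rfl fun i hi => ?_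
      rw [Finset.mem_range] at hi
      rw [← pow_succ]
      congr 1
      omega
    rw [h1, Finset.prod_range_succ (fun i => g i ^ (n - i)), Nat.sub_self, pow_zero, mul_one]

/-- extension of a `Fin n`-family to ℕ. -/
noncomputable def extF {n m : ℕ} (b : Fin n → EuclideanSpace ℝ (Fin m)) :
    ℕ → EuclideanSpace ℝ (Fin m) := fun i => if h : i < n then b ⟨i, h⟩ else 0

lemma extF_val {n : ℕ} (b : Fin n → EuclideanSpace ℝ (Fin m)) (i : Fin n) :
    extF b i.val = b i := by simp [extF, i.isLt]

lemma extF_image {n : ℕ} (b : Fin n → EuclideanSpace ℝ (Fin m)) {j : ℕ} (hj : j ≤ n) :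
    extF b '' Set.Iio j = b '' {i : Fin n | i.val < j} := by
  ext y
  constructor
  · rintro ⟨a, ha, rfl⟩
    have han : a < n := lt_of_lt_of_le ha hj
    exact ⟨⟨a, han⟩, ha, by simp [extF, han]⟩
  · rintro ⟨a, ha, rfl⟩
    exact ⟨a.val, ha, extF_val b a⟩

lemma li_extF {n t : ℕ} {b : Fin n → EuclideanSpace ℝ (Fin m)} (hLI : LinearIndependent ℝ b)
    (ht : t ≤ n) : LinearIndependent ℝ (fun i : Fin t => extF b i.val) := by
  have heq : (fun i : Fin t => extF b i.val)
      = b ∘ (fun i : Fin t => (⟨i.val, lt_of_lt_of_le i.isLt ht⟩ : Fin n)) := by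
    funext i
    simp [extF, lt_of_lt_of_le i.isLt ht, Function.comp]
  rw [heq]
  exact hLI.comp _ (fun a a' haa => Fin.ext (by
    have := congrArg Fin.val haa
    simpa using this))

lemma projPerp_eq_pPerp {n : ℕ} (b : Fin n → EuclideanSpace ℝ (Fin m)) {j : ℕ} (hj : j ≤ n)
    (x : EuclideanSpace ℝ (Fin m)) : projPerp b j x = pPerp (extF b) j x := by
  show pPerpS (b '' {i : Fin n | i.val < j}) x = pPerpS (extF b '' Set.Iio j) x
  rw [extF_image b hj]

lemma Pot_eq_prod {n : ℕ} (b : Fin n → EuclideanSpace ℝ (Fin m)) :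
    Pot b = ∏ j ∈ Finset.range n, ∏ i ∈ Finset.range (j+1),
      ‖pPerp (extF b) i (extF b i)‖ ^ 2 := by
  rw [prod_pow_count (fun i => ‖pPerp (extF b) i (extF b i)‖ ^ 2) n]
  rw [Pot, ← Fin.prod_univ_eq_prod_range (fun i => (‖pPerp (extF b) i (extF b i)‖ ^ 2) ^ (n - i)) n]
  refine Finset.prod_congr rfl fun i _ => ?_
  rw [← pow_mul]
  congr 2
  rw [bstar, projPerp_eq_pPerp b (le_of_lt i.isLt), extF_val]

lemma insertFam_eq_comp {n : ℕ} {α : Type*} (b : Fin n → α) (k l : Fin n) (hkl : k ≤ l)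
    (i : Fin n) : insertFam b k l i = b (cycPerm k.val l.val n hkl l.isLt i) := by
  unfold insertFam
  by_cases h1 : i.val < k.val
  · rw [if_pos (Or.inl h1), cycPerm_lt _ _ _ h1]
  · by_cases h2 : l.val < i.val
    · rw [if_pos (Or.inr h2), cycPerm_gt _ _ _ h2]
    · rw [if_neg (by tauto)]
      by_cases h3 : i = k
      · rw [if_pos h3]
        congr 1
        refine (Fin.ext ?_).symm
        rw [cycPerm_eq]
        rw [h3]
      · rw [if_neg h3]
        congr 1
        apply Fin.ext
        have hk : k.val < i.val := by
          rcases Nat.lt_or_ge i.val k.val with h | h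
          · exact absurd h h1
          · rcases Nat.eq_or_lt_of_le h with h' | h'
            · exact absurd (Fin.ext h'.symm) h3
            · exact h'
        rw [cycPerm_mid _ _ _ hk (by omega)]

end Aux

/-- Pot(σ_{k,ℓ}B) = Pot(B) · ∏_{i=k}^{ℓ} ‖π_i(b_ℓ)‖² / ‖π_i(b_i)‖². -/
theorem pot_insert {n m : ℕ} (b : Fin n → EuclideanSpace ℝ (Fin m))
    (hLI : LinearIndependent ℝ b) (k l : Fin n) (hkl : k ≤ l) :
    Pot (insertFam b k l) =
      Pot b * ∏ i ∈ Finset.Icc k l,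
        ‖projPerp b i.val (b l)‖ ^ 2 / ‖projPerp b i.val (b i)‖ ^ 2 := by
  classical
  set b' := insertFam b k l with hb'
  have hkl' : k.val ≤ l.val := hkl
  have hln : l.val < n := l.isLt
  set c := extF b with hc
  set c' := extF b' with hc'
  have hb'eq : ∀ i : Fin n, b' i = b (cycPerm k.val l.val n hkl' hln i) :=
    insertFam_eq_comp b k l hkl
  have hLI' : LinearIndependent ℝ b' := by
    have hcomp : b' = b ∘ (cycPerm k.val l.val n hkl' hln) := funext hb'eq
    rw [hcomp]
    exact hLI.comp _ (Equiv.injective _)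
  have hcc : ∀ i, i < n → c' i = c (cv k.val l.val i) := by
    intro i hi
    have hcvi : cv k.val l.val i < n := cv_lt hkl' hln hi
    have h1 : c' i = b' ⟨i, hi⟩ := extF_val b' ⟨i, hi⟩
    rw [h1, hb'eq ⟨i, hi⟩]
    have h2 : (cycPerm k.val l.val n hkl' hln ⟨i, hi⟩) = (⟨cv k.val l.val i, hcvi⟩ : Fin n) :=
      Fin.ext rfl
    rw [h2]
    exact (extF_val b ⟨cv k.val l.val i, hcvi⟩).symm
  have hLIc : LinearIndependent ℝ (fun i : Fin n => c i.val) := li_extF hLI (le_refl n)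
  have hne : ∀ j, j < n → ‖pPerp c j (c j)‖ ^ 2 ≠ 0 := by
    intro j hj
    have h0 := pPerp_ne_zero (T := n) hj hLIc
    exact pow_ne_zero 2 (norm_ne_zero_iff.mpr h0)
  have hg : ∀ t, t ≤ n → (gramM c t).det = ∏ i ∈ Finset.range t, ‖pPerp c i (c i)‖ ^ 2 :=
    fun t ht => gramM_det c t (li_extF hLI ht)
  have hg' : ∀ t, t ≤ n → (gramM c' t).det = ∏ i ∈ Finset.range t, ‖pPerp c' i (c' i)‖ ^ 2 :=
    fun t ht => gramM_det c' t (li_extF hLI' ht)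
  have hPot : Pot b = ∏ j ∈ Finset.range n, (gramM c (j+1)).det := by
    rw [Pot_eq_prod b]
    refine Finset.prod_congr rfl fun j hj => ?_
    rw [Finset.mem_range] at hj
    exact (hg (j+1) (by omega)).symm
  have hPot' : Pot b' = ∏ j ∈ Finset.range n, (gramM c' (j+1)).det := by
    rw [Pot_eq_prod b']
    refine Finset.prod_congr rfl fun j hj => ?_
    rw [Finset.mem_range] at hj
    exact (hg' (j+1) (by omega)).symm
  set r : ℕ → ℝ := fun j => if k.val ≤ j ∧ j ≤ l.val
    then ‖pPerp c j (c l.val)‖ ^ 2 / ‖pPerp c j (c j)‖ ^ 2 else 1 with hr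
  have key : ∀ j, j < n → (gramM c' (j+1)).det = (gramM c (j+1)).det * r j := by
    intro j hj
    by_cases hA : j < k.val
    · have h1 : gramM c' (j+1) = gramM c (j+1) := by
        ext p q
        have hp1 := p.isLt
        have hq1 := q.isLt
        have hp : c' p.val = c p.val := by
          rw [hcc p.val (by omega)]
          congr 1
          unfold cv
          rw [if_pos (by omega : p.val < k.val)]
        have hq2 : c' q.val = c q.val := by
          rw [hcc q.val (by omega)]
          congr 1
          unfold cv
          rw [if_pos (by omega : q.val < k.val)]
        show (inner ℝ (c' p.val) (c' q.val) : ℝ) = (inner ℝ (c p.val) (c q.val) : ℝ)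
        rw [hp, hq2]
      rw [h1]
      simp only [hr]
      rw [if_neg (by omega), mul_one]
    · by_cases hB : l.val < j
      · have hperm := gramM_det_perm c' c (j+1) (cycPerm k.val l.val (j+1) hkl' (by omega))
          (fun i => by
            have hi1 := i.isLt
            rw [hcc i.val (by omega)]
            rfl)
        rw [hperm]
        simp only [hr]
        rw [if_neg (by omega), mul_one]
      · have hkj : k.val ≤ j := by omega
        have hjl : j ≤ l.val := by omega
        set e : ℕ → EuclideanSpace ℝ (Fin m) := fun i => if i = j then c l.val else c i with he
        have hperm := gramM_det_perm c' e (j+1) (cycPerm k.val j (j+1) hkj (Nat.lt_succ_self j))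
          (fun i => by
            have hi1 := i.isLt
            have hij : i.val ≤ j := by omega
            rw [hcc i.val (by omega)]
            show c (cv k.val l.val i.val) = e (cv k.val j i.val)
            by_cases h1 : i.val < k.val
            · unfold cv
              rw [if_pos h1, if_pos h1]
              simp only [he]
              rw [if_neg (by omega)]
            · by_cases h2 : i.val = k.val
              · unfold cv
                rw [if_neg h1, if_neg h1, if_pos h2, if_pos h2]
                simp only [he]
                first | rfl | rw [if_pos rfl]
              · unfold cv
                rw [if_neg h1, if_neg h1, if_neg h2, if_neg h2,
                  if_pos (le_trans hij hjl), if_pos hij, he]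
                simp only []
                rw [if_neg (by omega)])
        have hLIe : LinearIndependent ℝ (fun i : Fin (j+1) => e i.val) := by
          have heq : (fun i : Fin (j+1) => e i.val) = b ∘ (fun i : Fin (j+1) =>
              if h : i.val < j then (⟨i.val, by omega⟩ : Fin n) else l) := by
            funext i
            have hi1 := i.isLt
            by_cases h : i.val < j
            · simp only [Function.comp, dif_pos h, he]
              rw [if_neg (by omega)]
              exact extF_val b ⟨i.val, by omega⟩
            · have hij : i.val = j := by omega
              simp only [Function.comp, dif_neg h, he]
              rw [if_pos hij]
              exact extF_val b l
          rw [heq]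
          refine hLI.comp _ ?_
          intro a a' haa
          have ha1 := a.isLt
          have ha2 := a'.isLt
          by_cases ha : a.val < j <;> by_cases ha' : a'.val < j
          · simp only [dif_pos ha, dif_pos ha'] at haa
            exact Fin.ext (by simpa using congrArg Fin.val haa)
          · simp only [dif_pos ha, dif_neg ha'] at haa
            have hv := congrArg Fin.val haa
            simp only [] at hv
            exact absurd hv (by omega)
          · simp only [dif_neg ha, dif_pos ha'] at haa
            have hv := congrArg Fin.val haa
            simp only [] at hv
            exact absurd hv (by omega)
          · exact Fin.ext (by omega)
        have hdeteq : (gramM e (j+1)).det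
            = (∏ i ∈ Finset.range j, ‖pPerp c i (c i)‖ ^ 2) * ‖pPerp c j (c l.val)‖ ^ 2 := by
          rw [gramM_det e (j+1) hLIe, Finset.prod_range_succ]
          congr 1
          · refine Finset.prod_congr rfl fun i hi => ?_
            rw [Finset.mem_range] at hi
            have him : e '' Set.Iio i = c '' Set.Iio i := by
              apply Set.image_congr
              intro a ha
              have : a < i := ha
              simp only [he]
              rw [if_neg (by omega)]
            have hei : e i = c i := by
              simp only [he]
              rw [if_neg (by omega)]
            rw [hei, pPerp_congr him]
          · have him : e '' Set.Iio j = c '' Set.Iio j := by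
              apply Set.image_congr
              intro a ha
              have : a < j := ha
              simp only [he]
              rw [if_neg (by omega)]
            have hej : e j = c l.val := by
              simp only [he]
              first | rfl | rw [if_pos rfl]
            rw [hej, pPerp_congr him]
        have hstep : (gramM c (j+1)).det
            = (∏ i ∈ Finset.range j, ‖pPerp c i (c i)‖ ^ 2) * ‖pPerp c j (c j)‖ ^ 2 := by
          rw [hg (j+1) (by omega), Finset.prod_range_succ]
        have hd := hne j hj
        rw [hperm, hdeteq, hstep]
        simp only [hr]
        rw [if_pos ⟨hkj, hjl⟩, mul_assoc]
        congr 1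
        rw [mul_comm, div_mul_cancel₀ _ hd]
  have h1 : ∏ j ∈ Finset.range n, (gramM c' (j+1)).det
      = (∏ j ∈ Finset.range n, (gramM c (j+1)).det) * ∏ j ∈ Finset.range n, r j := by
    rw [← Finset.prod_mul_distrib]
    exact Finset.prod_congr rfl fun j hj => key j (Finset.mem_range.mp hj)
  have h2 : ∏ j ∈ Finset.range n, r j = ∏ j ∈ Finset.Icc k.val l.val, r j := by
    refine (Finset.prod_subset ?_ ?_).symm
    · intro x hx
      rw [Finset.mem_Icc] at hx
      rw [Finset.mem_range]
      omega
    · intro x _ hnx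
      simp only [hr]
      rw [if_neg]
      intro hcon
      exact hnx (Finset.mem_Icc.mpr hcon)
  have h3 : ∏ j ∈ Finset.Icc k.val l.val, r j
      = ∏ i ∈ Finset.Icc k l, ‖projPerp b i.val (b l)‖ ^ 2 / ‖projPerp b i.val (b i)‖ ^ 2 := by
    rw [← Fin.map_valEmbedding_Icc, Finset.prod_map]
    refine Finset.prod_congr rfl fun i hi => ?_
    rw [Finset.mem_Icc] at hi
    show r i.val = _
    simp only [hr]
    rw [if_pos ⟨hi.1, hi.2⟩]
    rw [projPerp_eq_pPerp b (le_of_lt i.isLt), projPerp_eq_pPerp b (le_of_lt i.isLt)]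
    rw [← extF_val b l, ← extF_val b i, ← hc]
  rw [hPot', h1, ← hPot, h2, h3]
end

section
/- Every δ-PotLLL reduced basis is δ-LLL reduced. That is, if B = [b_1,…,b_n] is size-reduced and satisfies δ·Pot(B) ≤ Pot(σ_{k,ℓ} B) for all 1 ≤ k < ℓ ≤ n, then B satisfies the Lovász condition δ·‖π_k(b_k)‖² ≤ ‖π_k(b_{k+1})‖² for all 1 ≤ k < n. -/
open Finset

open scoped RealInnerProductSpace

lemma insertFam_succ {n : ℕ} {α : Type*} (b : Fin n → α) (k l : Fin n)
    (h : (l : ℕ) = (k : ℕ) + 1) : insertFam b k l = b ∘ Equiv.swap k l := by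
  funext i
  simp only [insertFam, Function.comp]
  rcases lt_trichotomy (i : ℕ) (k : ℕ) with hi | hi | hi
  · rw [if_pos (Or.inl hi),
      Equiv.swap_apply_of_ne_of_ne (Fin.ne_of_val_ne (by omega)) (Fin.ne_of_val_ne (by omega))]
  · have hik : i = k := Fin.ext hi
    rw [if_neg (by omega), if_pos hik, hik, Equiv.swap_apply_left]
  · rcases Nat.lt_or_ge (l : ℕ) (i : ℕ) with hli | hli
    · rw [if_pos (Or.inr hli),
        Equiv.swap_apply_of_ne_of_ne (Fin.ne_of_val_ne (by omega)) (Fin.ne_of_val_ne (by omega))]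
    · have hil : i = l := Fin.ext (by omega)
      rw [if_neg (by omega), if_neg (by rw [hil]; exact Fin.ne_of_val_ne (by omega)), hil,
        Equiv.swap_apply_right]
      congr 1
      exact Fin.ext (by simp [h])

lemma bstar_spec {n m : ℕ} (f : Fin n → EuclideanSpace ℝ (Fin m)) (i : Fin n) :
    f i - bstar f i ∈ Submodule.span ℝ (f '' {j : Fin n | (j : ℕ) < i.val}) := by
  simp only [bstar, projPerp, sub_sub_cancel]
  exact Submodule.coe_mem _

lemma bstar_mem_orth {n m : ℕ} (f : Fin n → EuclideanSpace ℝ (Fin m)) (i : Fin n) :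
    bstar f i ∈ (Submodule.span ℝ (f '' {j : Fin n | (j : ℕ) < i.val}))ᗮ := by
  simpa [bstar, projPerp] using
    Submodule.sub_starProjection_mem_orthogonal
      (K := Submodule.span ℝ (f '' {j : Fin n | (j : ℕ) < i.val})) (f i)

lemma bstar_ne_zero {n m : ℕ} {f : Fin n → EuclideanSpace ℝ (Fin m)}
    (hf : LinearIndependent ℝ f) (i : Fin n) : bstar f i ≠ 0 := by
  intro h
  have hmem : f i ∈ Submodule.span ℝ (f '' {j : Fin n | (j : ℕ) < i.val}) := by
    have h2 := bstar_spec f i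
    rwa [h, sub_zero] at h2
  exact hf.notMem_span_image (by simp) hmem

lemma orthProj_congr {m : ℕ} {U W : Submodule ℝ (EuclideanSpace ℝ (Fin m))} (h : U = W)
    (x : EuclideanSpace ℝ (Fin m)) :
    (Submodule.orthogonalProjection U x : EuclideanSpace ℝ (Fin m)) = Submodule.orthogonalProjection W x := by
  subst h; rfl

lemma line_of_mem_orth {m : ℕ} (V W : Submodule ℝ (EuclideanSpace ℝ (Fin m)))
    (u : EuclideanSpace ℝ (Fin m)) (hle : W ≤ V ⊔ Submodule.span ℝ {u}) (hu : u ∈ Vᗮ)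
    {x : EuclideanSpace ℝ (Fin m)} (hx : x ∈ W) (hx' : x ∈ Vᗮ) : ∃ t : ℝ, x = t • u := by
  rcases Submodule.mem_sup.mp (hle hx) with ⟨y, hy, s, hs, rfl⟩
  rcases Submodule.mem_span_singleton.mp hs with ⟨t, rfl⟩
  refine ⟨t, ?_⟩
  have hyV' : y ∈ Vᗮ := by
    have h2 := Submodule.sub_mem _ hx' (Submodule.smul_mem _ t hu)
    simpa using h2
  have hy0 : y = 0 := Submodule.disjoint_def.mp V.orthogonal_disjoint y hy hyV'
  simp [hy0]


/-- a δ-PotLLL reduced basis is δ-LLL reduced. -/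
theorem potLLL_is_LLL {n m : ℕ} (b : Fin n → EuclideanSpace ℝ (Fin m))
    (hLI : LinearIndependent ℝ b) (δ : ℝ) (hδ1 : 1/4 < δ) (hδ2 : δ ≤ 1)
    (hsize : SizeReduced b)
    (hpot : ∀ k l : Fin n, k < l → δ * Pot b ≤ Pot (insertFam b k l)) :
    ∀ k : ℕ, (hk : k + 1 < n) →
      δ * ‖projPerp b k (b ⟨k, Nat.lt_of_succ_lt hk⟩)‖ ^ 2 ≤
        ‖projPerp b k (b ⟨k + 1, hk⟩)‖ ^ 2 := by
  intro k hk
  have hk' : k < n := Nat.lt_of_succ_lt hk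
  set K : Fin n := ⟨k, hk'⟩ with hKdef
  set L : Fin n := ⟨k + 1, hk⟩ with hLdef
  have hKv : (K : ℕ) = k := rfl
  have hLv : (L : ℕ) = k + 1 := rfl
  set b' : Fin n → EuclideanSpace ℝ (Fin m) := insertFam b K L with hb'def
  have hswap : b' = b ∘ Equiv.swap K L := insertFam_succ b K L rfl
  have hLI' : LinearIndependent ℝ b' := hswap ▸ hLI.comp _ (Equiv.injective _)
  -- image-set facts
  have hset_low : ∀ j : ℕ, j ≤ k →
      b' '' {i : Fin n | (i : ℕ) < j} = b '' {i : Fin n | (i : ℕ) < j} := by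
    intro j hj
    apply Set.image_congr
    intro i hi
    have hi' : (i : ℕ) < j := hi
    rw [hswap]
    simp only [Function.comp]
    rw [Equiv.swap_apply_of_ne_of_ne (Fin.ne_of_val_ne (by omega)) (Fin.ne_of_val_ne (by omega))]
  have hswapset : ∀ j : ℕ, k + 1 < j →
      Equiv.swap K L '' {i : Fin n | (i : ℕ) < j} = {i : Fin n | (i : ℕ) < j} := by
    intro j hj
    ext x
    rw [Set.mem_image_equiv]
    simp only [Equiv.symm_swap, Set.mem_setOf_eq]
    by_cases h1 : x = K
    · subst h1; rw [Equiv.swap_apply_left]; constructor <;> intro _ <;> omega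
    by_cases h2 : x = L
    · subst h2; rw [Equiv.swap_apply_right]; constructor <;> intro _ <;> omega
    rw [Equiv.swap_apply_of_ne_of_ne h1 h2]
  have hset_high : ∀ j : ℕ, k + 1 < j →
      b' '' {i : Fin n | (i : ℕ) < j} = b '' {i : Fin n | (i : ℕ) < j} := by
    intro j hj
    rw [hswap, Set.image_comp, hswapset j hj]
  -- auxiliary: b' agrees with b away from K, L
  have hbstar_eq : ∀ i : Fin n, (i : ℕ) < k ∨ k + 1 < (i : ℕ) → bstar b' i = bstar b i := by
    intro i hi
    have hbi : b' i = b i := by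
      rw [hswap]
      simp only [Function.comp]
      rw [Equiv.swap_apply_of_ne_of_ne (Fin.ne_of_val_ne (by omega)) (Fin.ne_of_val_ne (by omega))]
    have hs : b' '' {j : Fin n | (j : ℕ) < (i : ℕ)} = b '' {j : Fin n | (j : ℕ) < (i : ℕ)} := by
      rcases hi with h | h
      · exact hset_low _ (le_of_lt h)
      · exact hset_high _ h
    simp only [bstar, projPerp, hbi]
    rw [orthProj_congr (congrArg (Submodule.span ℝ) hs) (b i)]
  -- the subspaces
  set V : Submodule ℝ (EuclideanSpace ℝ (Fin m)) :=
    Submodule.span ℝ (b '' {i : Fin n | (i : ℕ) < k}) with hVdef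
  set V2 : Submodule ℝ (EuclideanSpace ℝ (Fin m)) :=
    Submodule.span ℝ (b '' {i : Fin n | (i : ℕ) < k + 1}) with hV2def
  set V2' : Submodule ℝ (EuclideanSpace ℝ (Fin m)) :=
    Submodule.span ℝ (b' '' {i : Fin n | (i : ℕ) < k + 1}) with hV2'def
  have hVle : V ≤ V2 :=
    Submodule.span_mono (Set.image_mono (f := b) (fun x hx => Nat.lt_succ_of_lt hx))
  have hVle' : V ≤ V2' := by
    rw [hVdef, ← hset_low k le_rfl]
    exact Submodule.span_mono (Set.image_mono (f := b') (fun x hx => Nat.lt_succ_of_lt hx))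
  -- the four Gram–Schmidt vectors
  set u : EuclideanSpace ℝ (Fin m) := bstar b K with hudef
  set w : EuclideanSpace ℝ (Fin m) := bstar b L with hwdef
  set v : EuclideanSpace ℝ (Fin m) := bstar b' K with hvdef
  set z : EuclideanSpace ℝ (Fin m) := bstar b' L with hzdef
  have hb'K : b' K = b L := by rw [hswap]; exact congrArg b (Equiv.swap_apply_left K L)
  have hb'L : b' L = b K := by rw [hswap]; exact congrArg b (Equiv.swap_apply_right K L)
  -- orthogonality and decomposition facts
  have hu_orth : u ∈ Vᗮ := bstar_mem_orth b K
  have hw_orth : w ∈ V2ᗮ := bstar_mem_orth b L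
  have hv_orth : v ∈ Vᗮ := by
    have h := bstar_mem_orth b' K
    have h' : v ∈ (Submodule.span ℝ (b' '' {j : Fin n | (j : ℕ) < k}))ᗮ := h
    rwa [hset_low k le_rfl] at h'
  have hz_orth : z ∈ V2'ᗮ := bstar_mem_orth b' L
  have hw_orthV : w ∈ Vᗮ := Submodule.orthogonal_le hVle hw_orth
  have hz_orthV : z ∈ Vᗮ := Submodule.orthogonal_le hVle' hz_orth
  have hspecK : b K - u ∈ V := bstar_spec b K
  have hspecL : b L - w ∈ V2 := bstar_spec b L
  have hspecK' : b L - v ∈ V := by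
    have h : b' K - v ∈ Submodule.span ℝ (b' '' {j : Fin n | (j : ℕ) < k}) := bstar_spec b' K
    rw [hset_low k le_rfl, hb'K] at h
    exact h
  have hspecL' : b K - z ∈ V2' := by
    have h : b' L - z ∈ V2' := bstar_spec b' L
    rwa [hb'L] at h
  -- memberships
  have hbKmem : b K ∈ V2 := Submodule.subset_span ⟨K, Nat.lt_succ_self k, rfl⟩
  have hbLmem' : b L ∈ V2' := Submodule.subset_span ⟨K, Nat.lt_succ_self k, hb'K⟩
  have humemV2 : u ∈ V2 := by
    have h := Submodule.sub_mem V2 hbKmem (hVle hspecK)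
    simpa using h
  have hvmemV2' : v ∈ V2' := by
    have h := Submodule.sub_mem V2' hbLmem' (hVle' hspecK')
    simpa using h
  have huw : ⟪u, w⟫ = 0 := (Submodule.mem_orthogonal V2 w).mp hw_orth u humemV2
  have hvz : ⟪v, z⟫ = 0 := (Submodule.mem_orthogonal V2' z).mp hz_orth v hvmemV2'
  -- nonvanishing
  have hu0 : u ≠ 0 := bstar_ne_zero hLI K
  have hw0 : w ≠ 0 := bstar_ne_zero hLI L
  have hv0 : v ≠ 0 := bstar_ne_zero hLI' K
  have hz0 : z ≠ 0 := bstar_ne_zero hLI' L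
  -- V2 lies in V ⊔ ℝu,  V2' lies in V ⊔ ℝv
  have hsupV2 : V2 ≤ V ⊔ Submodule.span ℝ {u} := by
    rw [hV2def]
    apply Submodule.span_le.mpr
    rintro y ⟨i, hi, rfl⟩
    have hi' : (i : ℕ) < k + 1 := hi
    by_cases hik : (i : ℕ) < k
    · exact Submodule.mem_sup_left (Submodule.subset_span ⟨i, hik, rfl⟩)
    · have hiK : i = K := Fin.ext (by omega)
      rw [hiK, show b K = (b K - u) + u from (sub_add_cancel (b K) u).symm]
      exact Submodule.add_mem _ (Submodule.mem_sup_left hspecK)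
        (Submodule.mem_sup_right (Submodule.subset_span rfl))
  have hsupV2' : V2' ≤ V ⊔ Submodule.span ℝ {v} := by
    rw [hV2'def]
    apply Submodule.span_le.mpr
    rintro y ⟨i, hi, rfl⟩
    have hi' : (i : ℕ) < k + 1 := hi
    by_cases hik : (i : ℕ) < k
    · have hbi : b' i = b i := by
        rw [hswap]
        exact congrArg b (Equiv.swap_apply_of_ne_of_ne (Fin.ne_of_val_ne (by omega))
          (Fin.ne_of_val_ne (by omega)))
      rw [hbi]
      exact Submodule.mem_sup_left (Submodule.subset_span ⟨i, hik, rfl⟩)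
    · have hiK : i = K := Fin.ext (by omega)
      rw [hiK, hb'K, show b L = (b L - v) + v from (sub_add_cancel (b L) v).symm]
      exact Submodule.add_mem _ (Submodule.mem_sup_left hspecK')
        (Submodule.mem_sup_right (Submodule.subset_span rfl))
  -- v = t•u + w,  z = u - s•v
  obtain ⟨t, ht⟩ : ∃ t : ℝ, v - w = t • u := by
    refine line_of_mem_orth V V2 u hsupV2 hu_orth ?_ (Submodule.sub_mem _ hv_orth hw_orthV)
    have h1 : v - w = (b L - w) - (b L - v) := by abel
    rw [h1]
    exact Submodule.sub_mem _ hspecL (hVle hspecK')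
  obtain ⟨s, hs⟩ : ∃ s : ℝ, u - z = s • v := by
    refine line_of_mem_orth V V2' v hsupV2' hv_orth ?_ (Submodule.sub_mem _ hu_orth hz_orthV)
    have h1 : u - z = (b K - z) - (b K - u) := by abel
    rw [h1]
    exact Submodule.sub_mem _ hspecL' (hVle' hspecK)
  have hveq : v = t • u + w := sub_eq_iff_eq_add.mp ht
  have hzeq : z = u - s • v := by
    have h1 : u = s • v + z := sub_eq_iff_eq_add.mp hs
    rw [h1]; abel
  -- inner-product algebra
  have e1 : ⟪u, v⟫ = t * ⟪u, u⟫ := by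
    rw [hveq, inner_add_right, real_inner_smul_right, huw]; ring
  have e2 : ⟪v, v⟫ = t ^ 2 * ⟪u, u⟫ + ⟪w, w⟫ := by
    rw [hveq]
    simp only [inner_add_left, inner_add_right, real_inner_smul_left, real_inner_smul_right]
    rw [real_inner_comm u w, huw]; ring
  have e3 : ⟪u, v⟫ = s * ⟪v, v⟫ := by
    have h0 : ⟪v, z⟫ = ⟪v, u⟫ - s * ⟪v, v⟫ := by
      rw [hzeq, inner_sub_right, real_inner_smul_right]
    rw [h0] at hvz
    rw [real_inner_comm v u]
    linarith
  have e4 : ⟪z, z⟫ = ⟪u, u⟫ - s * ⟪u, v⟫ := by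
    rw [hzeq]
    simp only [inner_sub_left, inner_sub_right, real_inner_smul_left, real_inner_smul_right]
    linear_combination (-s) * real_inner_comm u v + (-s) * e3
  have key : ⟪v, v⟫ * ⟪z, z⟫ = ⟪u, u⟫ * ⟪w, w⟫ := by
    have k1 : ⟪v, v⟫ * ⟪z, z⟫ = ⟪v, v⟫ * ⟪u, u⟫ - ⟪u, v⟫ * ⟪u, v⟫ := by
      rw [e4]
      linear_combination (⟪u, v⟫ : ℝ) * e3
    rw [k1, e2, e1]; ring
  have keyn : ‖v‖ ^ 2 * ‖z‖ ^ 2 = ‖u‖ ^ 2 * ‖w‖ ^ 2 := by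
    simp only [real_inner_self_eq_norm_sq] at key
    exact key
  -- split the potential at K and L
  have hKL : K < L := Fin.mk_lt_mk.mpr (Nat.lt_succ_self k)
  have hKLne : K ≠ L := ne_of_lt hKL
  have hsplit : ∀ f : Fin n → EuclideanSpace ℝ (Fin m), Pot f =
      ‖bstar f K‖ ^ (2 * (n - (K : ℕ))) * (‖bstar f L‖ ^ (2 * (n - (L : ℕ))) *
        ∏ i ∈ (univ.erase K).erase L, ‖bstar f i‖ ^ (2 * (n - (i : ℕ)))) := by
    intro f
    rw [Pot, ← Finset.mul_prod_erase univ _ (mem_univ K),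
      ← Finset.mul_prod_erase (univ.erase K) _
        (Finset.mem_erase.mpr ⟨hKLne.symm, mem_univ L⟩)]
  set R : ℝ := ∏ i ∈ (univ.erase K).erase L, ‖bstar b i‖ ^ (2 * (n - (i : ℕ))) with hRdef
  have hRagree : ∏ i ∈ (univ.erase K).erase L, ‖bstar b' i‖ ^ (2 * (n - (i : ℕ))) = R := by
    refine Finset.prod_congr rfl (fun i hi => ?_)
    obtain ⟨h1, h2⟩ := Finset.mem_erase.mp hi
    have h3 : i ≠ K := (Finset.mem_erase.mp h2).1
    have h4 : (i : ℕ) ≠ k := fun h => h3 (Fin.ext h)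
    have h5 : (i : ℕ) ≠ k + 1 := fun h => h1 (Fin.ext h)
    rw [hbstar_eq i (by omega)]
  have hnormpos : ∀ (f : Fin n → EuclideanSpace ℝ (Fin m)) (_ : LinearIndependent ℝ f)
      (i : Fin n), (0:ℝ) < ‖bstar f i‖ := fun f hf i => norm_pos_iff.mpr (bstar_ne_zero hf i)
  have hRpos : 0 < R := Finset.prod_pos (fun i _ => pow_pos (hnormpos b hLI i) _)
  set p : ℕ := n - (k + 1) with hpdef
  have hnk : n - k = p + 1 := by omega
  have h1 : Pot b = (‖u‖ ^ 2) ^ (p + 1) * ((‖w‖ ^ 2) ^ p * R) := by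
    rw [hsplit b, hKv, hnk, pow_mul, pow_mul, ← hudef, ← hwdef, ← hRdef]
  have h2 : Pot b' = (‖v‖ ^ 2) ^ (p + 1) * ((‖z‖ ^ 2) ^ p * R) := by
    rw [hsplit b', hKv, hnk, pow_mul, pow_mul, ← hvdef, ← hzdef, hRagree]
  set C : ℝ := (‖u‖ ^ 2) ^ p * (‖w‖ ^ 2) ^ p * R with hCdef
  have hCpos : 0 < C :=
    mul_pos (mul_pos (pow_pos (pow_pos (hnormpos b hLI K) 2) p)
      (pow_pos (pow_pos (hnormpos b hLI L) 2) p)) hRpos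
  have hPb : Pot b = ‖u‖ ^ 2 * C := by
    rw [h1, hCdef, pow_succ]; ring
  have hPb' : Pot b' = ‖v‖ ^ 2 * C := by
    have hstep : (‖v‖ ^ 2) ^ (p + 1) * ((‖z‖ ^ 2) ^ p * R)
        = ‖v‖ ^ 2 * ((‖v‖ ^ 2 * ‖z‖ ^ 2) ^ p * R) := by
      rw [pow_succ, mul_pow]; ring
    rw [h2, hstep, keyn, hCdef, mul_pow]
    try ring
  -- put it together
  have hineq := hpot K L hKL
  rw [← hb'def, hPb, hPb'] at hineq
  have h3 : (δ * ‖u‖ ^ 2) * C ≤ ‖v‖ ^ 2 * C := by rw [mul_assoc]; exact hineq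
  have h4 : δ * ‖u‖ ^ 2 ≤ ‖v‖ ^ 2 := le_of_mul_le_mul_right h3 hCpos
  have hvproj : v = projPerp b k (b L) := by
    have ha : v = b' K - (Submodule.orthogonalProjection
        (Submodule.span ℝ (b' '' {i : Fin n | (i : ℕ) < k})) (b' K) : EuclideanSpace ℝ (Fin m)) := rfl
    rw [ha, hb'K, orthProj_congr (congrArg (Submodule.span ℝ) (hset_low k le_rfl)) (b L)]
    rfl
  have huproj : u = projPerp b k (b K) := rfl
  rw [← hvproj, show b ⟨k, Nat.lt_of_succ_lt hk⟩ = b K from rfl, ← huproj]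
  exact h4
end

section
/- The quotient P_{j,ℓ} := Pot(σ_{j,ℓ} B)/Pot(B) satisfies the recursion P_{ℓ,ℓ} = 1 and, for j < ℓ, P_{j,ℓ} = P_{j+1,ℓ} · (‖b_ℓ^*‖² + ∑_{i=j}^{ℓ−1} μ_{ℓ,i}² ‖b_i^*‖²) / ‖b_j^*‖². -/
open Finset Matrix InnerProductSpace

instance myFinWF (k : ℕ) : WellFoundedLT (Fin k) := inferInstance

namespace Aux

variable {m : ℕ}

local notation "E" => EuclideanSpace ℝ (Fin m)

/-- membership in orthogonal of a span, from orthogonality to generators -/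
lemma mem_orthogonal_span {s : Set E} {x : E}
    (h : ∀ y ∈ s, (inner ℝ y x : ℝ) = 0) : x ∈ (Submodule.span ℝ s)ᗮ := by
  rw [Submodule.mem_orthogonal]
  intro u hu
  induction hu using Submodule.span_induction with
  | mem y hy => exact h y hy
  | zero => simp
  | add u v _ _ hu hv => simp [inner_add_left, hu, hv]
  | smul a u _ hu => simp [inner_smul_left, hu]

/-- Characterization: gramSchmidt = vector minus projection onto span of earlier vectors. -/
lemma gs_eq_sub_proj {k : ℕ} (c : Fin k → E) (i : Fin k) :
    gramSchmidt ℝ c i = c i -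
      (Submodule.orthogonalProjection (Submodule.span ℝ (c '' Set.Iio i)) (c i) : E) := by
  have h1 : c i - gramSchmidt ℝ c i ∈ Submodule.span ℝ (c '' Set.Iio i) := by
    rw [← span_gramSchmidt_Iio ℝ c i, gramSchmidt_def ℝ c i, sub_sub_cancel]
    refine Submodule.sum_mem _ fun x hx => ?_
    have hmem : (Submodule.orthogonalProjection (ℝ ∙ gramSchmidt ℝ c x) (c i) : E)
        ∈ (ℝ ∙ gramSchmidt ℝ c x) := (Submodule.orthogonalProjection _ _).2
    refine Submodule.span_mono ?_ hmem
    exact Set.singleton_subset_iff.2 ⟨x, Finset.mem_Iio.1 hx, rfl⟩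
  have h2 : gramSchmidt ℝ c i ∈ (Submodule.span ℝ (c '' Set.Iio i))ᗮ := by
    rw [← span_gramSchmidt_Iio ℝ c i]
    refine mem_orthogonal_span fun y hy => ?_
    obtain ⟨x, hx, rfl⟩ := hy
    exact gramSchmidt_orthogonal ℝ c (ne_of_lt hx)
  have := Submodule.eq_starProjection_of_mem_orthogonal (u := c i) h1 (by simpa using h2)
  rw [show (Submodule.orthogonalProjection (Submodule.span ℝ (c '' Set.Iio i)) (c i) : E) = _ from this]
  abel

lemma gs_congr {k : ℕ} {c c' : Fin k → E} (i : Fin k) (h : ∀ x, x ≤ i → c x = c' x) :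
    gramSchmidt ℝ c i = gramSchmidt ℝ c' i := by
  have himg : c '' Set.Iio i = c' '' Set.Iio i :=
    Set.image_congr fun x hx => h x (le_of_lt hx)
  rw [gs_eq_sub_proj, gs_eq_sub_proj, himg, h i le_rfl]

lemma gs_trunc {n k : ℕ} (c : Fin n → E) (hk : k ≤ n) (i : Fin k) :
    gramSchmidt ℝ (c ∘ Fin.castLE hk) i = gramSchmidt ℝ c (Fin.castLE hk i) := by
  have hset : Fin.castLE hk '' Set.Iio i = Set.Iio (Fin.castLE hk i) := by
    ext x
    constructor
    · rintro ⟨y, hy, rfl⟩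
      exact hy
    · intro hx
      have hxk : x.val < k := lt_of_lt_of_le hx i.isLt.le
      exact ⟨⟨x.val, hxk⟩, hx, rfl⟩
  have himg : (c ∘ Fin.castLE hk) '' Set.Iio i = c '' Set.Iio (Fin.castLE hk i) := by
    rw [Set.image_comp, hset]
  rw [gs_eq_sub_proj, gs_eq_sub_proj, himg]
  rfl

lemma bstar_eq_gs {n : ℕ} (b : Fin n → E) (i : Fin n) :
    bstar b i = gramSchmidt ℝ b i := by
  rw [gs_eq_sub_proj]
  rfl

/-- det of the Gram matrix equals the product of squared GS norms. Unconditional. -/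
lemma det_gram {k : ℕ} (c : Fin k → E) :
    (Matrix.of fun a b : Fin k => (inner ℝ (c a) (c b) : ℝ)).det
      = ∏ i : Fin k, ‖gramSchmidt ℝ c i‖ ^ 2 := by
  classical
  set g : Fin k → E := gramSchmidt ℝ c with hg
  set L : Matrix (Fin k) (Fin k) ℝ := Matrix.of fun a i =>
    if a = i then 1 else if i < a then (inner ℝ (g i) (c a) : ℝ) / ‖g i‖ ^ 2 else 0 with hL
  have hrep : ∀ a, c a = ∑ i : Fin k, L a i • g i := by
    intro a
    have h0 : ∑ i : Fin k, L a i • g i = ∑ i ∈ Finset.Iic a, L a i • g i := by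
      refine (Finset.sum_subset (Finset.subset_univ _) fun i _ hi => ?_).symm
      have hia : ¬ i ≤ a := by simpa using hi
      have h1 : ¬ (a = i) := fun h => hia (h ▸ le_rfl)
      have h2 : ¬ (i < a) := fun h => hia h.le
      simp [hL, h1, h2]
    rw [h0, ← Finset.Iio_insert, Finset.sum_insert (by simp)]
    have hdiag : L a a = 1 := by simp [hL]
    rw [hdiag, one_smul]
    have : ∀ i ∈ Finset.Iio a, L a i • g i
        = ((inner ℝ (g i) (c a) : ℝ) / (‖g i‖ : ℝ) ^ 2) • g i := by
      intro i hi
      have hia : i < a := Finset.mem_Iio.1 hi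
      simp [hL, hia, hia.ne']
    rw [Finset.sum_congr rfl this]
    exact gramSchmidt_def'' ℝ c a
  have hGram : (Matrix.of fun a b : Fin k => (inner ℝ (c a) (c b) : ℝ))
      = L * Matrix.diagonal (fun i => ‖g i‖ ^ 2) * Lᵀ := by
    ext a b
    have expand : (inner ℝ (c a) (c b) : ℝ) = ∑ i : Fin k, L a i * (‖g i‖ ^ 2 * L b i) := by
      rw [hrep a, hrep b]
      rw [sum_inner]
      refine Finset.sum_congr rfl fun i _ => ?_
      rw [real_inner_smul_left, inner_sum]
      rw [Finset.sum_eq_single i]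
      · rw [real_inner_smul_right, real_inner_self_eq_norm_sq]; ring
      · intro j _ hj
        rw [real_inner_smul_right, gramSchmidt_orthogonal ℝ c (Ne.symm hj)]; ring
      · intro h; exact absurd (Finset.mem_univ i) h
    have hrhs : (L * Matrix.diagonal (fun i => ‖g i‖ ^ 2) * Lᵀ) a b
        = ∑ i : Fin k, L a i * ‖g i‖ ^ 2 * L b i := by
      rw [Matrix.mul_apply]
      refine Finset.sum_congr rfl fun x _ => ?_
      rw [Matrix.mul_diagonal, Matrix.transpose_apply]
    show (inner ℝ (c a) (c b) : ℝ) = _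
    rw [hrhs, expand]
    exact Finset.sum_congr rfl fun i _ => by ring
  have hLdet : L.det = 1 := by
    have htri : L.BlockTriangular OrderDual.toDual := by
      intro a i h
      have h1 : a < i := h
      simp [hL, h1.ne, not_lt.2 h1.le, not_lt_of_gt h1]
    rw [Matrix.det_of_lowerTriangular L htri]
    have : ∀ i : Fin k, L i i = 1 := fun i => by simp [hL]
    simp [this]
  rw [hGram, Matrix.det_mul, Matrix.det_mul, Matrix.det_transpose, hLdet,
    Matrix.det_diagonal, one_mul, mul_one]

/-- Gram determinant of the first k vectors. -/
noncomputable def Dk {n : ℕ} (c : Fin n → E) (k : ℕ) (hk : k ≤ n) : ℝ :=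
  (Matrix.of fun a b : Fin k =>
    (inner ℝ (c (Fin.castLE hk a)) (c (Fin.castLE hk b)) : ℝ)).det

lemma Dk_eq_prod {n : ℕ} (c : Fin n → E) (k : ℕ) (hk : k ≤ n) :
    Dk c k hk = ∏ i : Fin k, ‖gramSchmidt ℝ c (Fin.castLE hk i)‖ ^ 2 := by
  rw [Dk]
  rw [show (Matrix.of fun a b : Fin k =>
      (inner ℝ (c (Fin.castLE hk a)) (c (Fin.castLE hk b)) : ℝ))
    = (Matrix.of fun a b : Fin k =>
      (inner ℝ ((c ∘ Fin.castLE hk) a) ((c ∘ Fin.castLE hk) b) : ℝ)) from rfl]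
  rw [det_gram (c ∘ Fin.castLE hk)]
  exact Finset.prod_congr rfl fun i _ => by rw [gs_trunc]

lemma prod_prod_range (f : ℕ → ℝ) (n : ℕ) :
    ∏ k ∈ Finset.range n, ∏ i ∈ Finset.range (k+1), f i
      = ∏ i ∈ Finset.range n, f i ^ (n - i) := by
  induction n with
  | zero => simp
  | succ n ih =>
    rw [Finset.prod_range_succ, ih, Finset.prod_range_succ (fun i => f i ^ (n + 1 - i)),
      Finset.prod_range_succ f, Nat.add_sub_cancel_left, pow_one, ← mul_assoc,
      ← Finset.prod_mul_distrib]
    congr 1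
    refine Finset.prod_congr rfl fun i hi => ?_
    have : i < n := Finset.mem_range.1 hi
    rw [← pow_succ]
    congr 1
    omega

lemma Pot_eq_prod_Dk {n : ℕ} (c : Fin n → E) :
    Pot c = ∏ k : Fin n, Dk c (k.val + 1) k.isLt := by
  classical
  set f : ℕ → ℝ := fun i => if h : i < n then ‖gramSchmidt ℝ c ⟨i, h⟩‖ ^ 2 else 1 with hf
  have hDk : ∀ (k : ℕ) (hk : k ≤ n), Dk c k hk = ∏ i ∈ Finset.range k, f i := by
    intro k hk
    rw [Dk_eq_prod, ← Fin.prod_univ_eq_prod_range f k]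
    refine Finset.prod_congr rfl fun i _ => ?_
    have h : (i : ℕ) < n := lt_of_lt_of_le i.isLt hk
    simp only [hf, dif_pos h]
    rfl
  have hPot : Pot c = ∏ i ∈ Finset.range n, f i ^ (n - i) := by
    rw [Pot, ← Fin.prod_univ_eq_prod_range (fun i => f i ^ (n - i)) n]
    refine Finset.prod_congr rfl fun i _ => ?_
    simp only [hf, dif_pos i.isLt, Fin.eta, bstar_eq_gs, pow_mul]
  rw [hPot, ← prod_prod_range f n]
  rw [← Fin.prod_univ_eq_prod_range (fun k => ∏ i ∈ Finset.range (k+1), f i) n]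
  exact (Finset.prod_congr rfl fun k _ => hDk (k.val+1) k.isLt).symm

lemma Dk_swap {n : ℕ} (c : Fin n → E) (j : ℕ) (hj : j + 1 < n) (k : ℕ) (hk : k ≤ n)
    (hkj : k ≠ j + 1) :
    Dk (c ∘ Equiv.swap (⟨j, by omega⟩ : Fin n) ⟨j+1, hj⟩) k hk = Dk c k hk := by
  rcases lt_or_ge k (j+1) with h | h
  · have hfix : ∀ a : Fin k, Equiv.swap (⟨j, by omega⟩ : Fin n) ⟨j+1, hj⟩ (Fin.castLE hk a)
        = Fin.castLE hk a := by
      intro a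
      refine Equiv.swap_apply_of_ne_of_ne ?_ ?_ <;>
        · simp only [ne_eq, Fin.ext_iff, Fin.castLE]
          omega
    unfold Dk
    congr 1
    ext a b
    simp [Function.comp, hfix]
  · have h2 : j + 1 < k := lt_of_le_of_ne h (Ne.symm hkj)
    have hcomm : ∀ a : Fin k, Equiv.swap (⟨j, by omega⟩ : Fin n) ⟨j+1, hj⟩ (Fin.castLE hk a)
        = Fin.castLE hk (Equiv.swap (⟨j, by omega⟩ : Fin k) ⟨j+1, h2⟩ a) := by
      intro a
      simp only [Equiv.swap_apply_def, Fin.ext_iff, Fin.castLE]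
      split_ifs <;> simp_all [Fin.ext_iff] <;> omega
    unfold Dk
    rw [show (Matrix.of fun a b : Fin k =>
        (inner ℝ ((c ∘ Equiv.swap (⟨j, by omega⟩ : Fin n) ⟨j+1, hj⟩) (Fin.castLE hk a))
          ((c ∘ Equiv.swap (⟨j, by omega⟩ : Fin n) ⟨j+1, hj⟩) (Fin.castLE hk b)) : ℝ))
      = (Matrix.of fun a b : Fin k =>
        (inner ℝ (c (Fin.castLE hk a)) (c (Fin.castLE hk b)) : ℝ)).submatrix
          (Equiv.swap (⟨j, by omega⟩ : Fin k) ⟨j+1, h2⟩) (Equiv.swap (⟨j, by omega⟩ : Fin k) ⟨j+1, h2⟩) from by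
        ext a b
        simp [Matrix.submatrix, Function.comp, hcomm]]
    exact Matrix.det_submatrix_equiv_self _ _

lemma Pot_swap {n : ℕ} (c : Fin n → E) (j : ℕ) (hj : j + 1 < n) :
    Pot (c ∘ Equiv.swap (⟨j, by omega⟩ : Fin n) ⟨j+1, hj⟩)
        * ‖gramSchmidt ℝ c ⟨j, by omega⟩‖ ^ 2
      = Pot c * ‖gramSchmidt ℝ (c ∘ Equiv.swap (⟨j, by omega⟩ : Fin n) ⟨j+1, hj⟩) ⟨j, by omega⟩‖ ^ 2 := by
  classical
  have hjn : j < n := by omega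
  set σ := Equiv.swap (⟨j, by omega⟩ : Fin n) ⟨j+1, hj⟩ with hσ
  set c' := c ∘ σ with hc'
  have hagree : ∀ x : Fin n, x.val < j → c' x = c x := by
    intro x hx
    simp only [hc', Function.comp]
    rw [hσ, Equiv.swap_apply_of_ne_of_ne] <;>
      · simp only [ne_eq, Fin.ext_iff]
        omega
  have hgs_lt : ∀ x : Fin n, x.val < j → gramSchmidt ℝ c' x = gramSchmidt ℝ c x := by
    intro x hx
    refine gs_congr x fun y hy => ?_
    exact hagree y (lt_of_le_of_lt hy hx)
  -- split products at the index jF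
  set jF : Fin n := ⟨j, hjn⟩ with hjF
  rw [Pot_eq_prod_Dk c, Pot_eq_prod_Dk c']
  rw [← Finset.prod_erase_mul Finset.univ _ (Finset.mem_univ jF),
      ← Finset.prod_erase_mul Finset.univ (fun k : Fin n => Dk c (k.val+1) k.isLt)
        (Finset.mem_univ jF)]
  have herase : ∏ k ∈ Finset.univ.erase jF, Dk c' (k.val+1) k.isLt
      = ∏ k ∈ Finset.univ.erase jF, Dk c (k.val+1) k.isLt := by
    refine Finset.prod_congr rfl fun k hk => ?_
    have : k ≠ jF := Finset.ne_of_mem_erase hk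
    exact Dk_swap c j hj (k.val+1) k.isLt (by simpa [Fin.ext_iff, hjF] using Fin.val_ne_of_ne this)
  rw [herase]
  -- now handle the jF factor
  have hexp : ∀ d : Fin n → E, Dk d (j+1) hjn
      = (∏ i : Fin j, ‖gramSchmidt ℝ d ⟨i.val, by omega⟩‖ ^ 2) * ‖gramSchmidt ℝ d jF‖ ^ 2 := by
    intro d
    rw [Dk_eq_prod, Fin.prod_univ_castSucc]
    congr 1
  have hDc' : Dk c' (j+1) hjn
      = (∏ i : Fin j, ‖gramSchmidt ℝ c ⟨i.val, by omega⟩‖ ^ 2) * ‖gramSchmidt ℝ c' jF‖ ^ 2 := by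
    rw [hexp c']
    congr 1
    exact Finset.prod_congr rfl fun i _ => by rw [hgs_lt ⟨i.val, by omega⟩ i.isLt]
  have hDc : Dk c (j+1) hjn
      = (∏ i : Fin j, ‖gramSchmidt ℝ c ⟨i.val, by omega⟩‖ ^ 2) * ‖gramSchmidt ℝ c jF‖ ^ 2 :=
    hexp c
  have hfact : ∀ (kk : Fin n), kk = jF → Dk c' (kk.val+1) kk.isLt = Dk c' (j+1) hjn := by
    rintro kk rfl; rfl
  rw [show (jF.val + 1) = j + 1 from rfl] at *
  have e1 : Dk c' (jF.val+1) jF.isLt = Dk c' (j+1) hjn := rfl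
  have e2 : Dk c (jF.val+1) jF.isLt = Dk c (j+1) hjn := rfl
  rw [e1, e2, hDc', hDc]
  ring

lemma norm_sq_orthosum {k : ℕ} (c : Fin k → E) (s : Finset (Fin k)) (μ : Fin k → ℝ) :
    ‖∑ i ∈ s, μ i • gramSchmidt ℝ c i‖ ^ 2
      = ∑ i ∈ s, (μ i) ^ 2 * ‖gramSchmidt ℝ c i‖ ^ 2 := by
  rw [← real_inner_self_eq_norm_sq, sum_inner]
  refine Finset.sum_congr rfl fun i hi => ?_
  rw [real_inner_smul_left, inner_sum, Finset.sum_eq_single i]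
  · rw [real_inner_smul_right, real_inner_self_eq_norm_sq]; ring
  · intro j _ hj
    rw [real_inner_smul_right, gramSchmidt_orthogonal ℝ c (Ne.symm hj)]; ring
  · intro h; exact absurd hi h

lemma pyth {n : ℕ} (b : Fin n → E) (hLI : LinearIndependent ℝ b) (j l : Fin n) (hjl : j ≤ l) :
    ‖projPerp b j.val (b l)‖ ^ 2
      = ‖bstar b l‖ ^ 2 + ∑ i ∈ Finset.Ico j l, (mu b l i) ^ 2 * ‖bstar b i‖ ^ 2 := by
  classical
  set g : Fin n → E := gramSchmidt ℝ b with hg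
  set μ : Fin n → ℝ := fun i => (inner ℝ (g i) (b l) : ℝ) / ‖g i‖ ^ 2 with hμ
  have hmu : ∀ i : Fin n, mu b l i = μ i := by
    intro i
    rw [mu, bstar_eq_gs, hμ, real_inner_comm, real_inner_self_eq_norm_sq]
  have hgl_ne : ∀ i : Fin n, g i ≠ 0 := fun i => gramSchmidt_ne_zero i hLI
  have hinner_gl : (inner ℝ (g l) (b l) : ℝ) = ‖g l‖ ^ 2 := by
    conv_lhs => rw [gramSchmidt_def' ℝ b l]
    rw [inner_add_right, real_inner_self_eq_norm_sq]
    have hzero : (inner ℝ (g l)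
        (∑ i ∈ Finset.Iio l, (ℝ ∙ g i).starProjection (b l)) : ℝ) = 0 := by
      rw [inner_sum]
      refine Finset.sum_eq_zero fun i hi => ?_
      rw [Submodule.starProjection_singleton]
      rw [real_inner_smul_right, gramSchmidt_orthogonal ℝ b (Finset.mem_Iio.1 hi).ne']
      ring
    rw [hzero, add_zero]
  have hμl : μ l = 1 := by
    rw [hμ]
    simp only [hinner_gl]
    exact div_self (pow_ne_zero 2 (norm_ne_zero_iff.2 (hgl_ne l)))
  have hrep : b l = ∑ i ∈ Finset.Iic l, μ i • g i := by
    rw [← Finset.Iio_insert, Finset.sum_insert (by simp), hμl, one_smul]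
    have : ∀ i ∈ Finset.Iio l, μ i • g i = (ℝ ∙ g i).starProjection (b l) := by
      intro i _
      rw [Submodule.starProjection_singleton, hμ]
      norm_num
    rw [Finset.sum_congr rfl this]
    exact gramSchmidt_def' ℝ b l
  have hsplit : ∑ i ∈ Finset.Iic l, μ i • g i
      = (∑ i ∈ Finset.Iio j, μ i • g i) + ∑ i ∈ Finset.Icc j l, μ i • g i := by
    rw [← Finset.sum_union]
    · congr 1
      ext x
      simp only [Finset.mem_Iic, Finset.mem_union, Finset.mem_Iio, Finset.mem_Icc,
        Fin.le_def, Fin.lt_def]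
      omega
    · rw [Finset.disjoint_left]
      intro x hx hx2
      simp only [Finset.mem_Iio, Fin.lt_def] at hx
      simp only [Finset.mem_Icc, Fin.le_def] at hx2
      omega
  have hspan : Submodule.span ℝ (b '' {x : Fin n | (x : ℕ) < j.val})
      = Submodule.span ℝ (g '' Set.Iio j) := by
    rw [hg, span_gramSchmidt_Iio ℝ b j]
    rfl
  have hv : (∑ i ∈ Finset.Iio j, μ i • g i)
      ∈ Submodule.span ℝ (b '' {x : Fin n | (x : ℕ) < j.val}) := by
    rw [hspan]
    refine Submodule.sum_mem _ fun i hi => Submodule.smul_mem _ _ (Submodule.subset_span ?_)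
    exact ⟨i, Finset.mem_Iio.1 hi, rfl⟩
  have hdiff : b l - ∑ i ∈ Finset.Iio j, μ i • g i = ∑ i ∈ Finset.Icc j l, μ i • g i := by
    rw [hrep, hsplit]; abel
  have horth : b l - ∑ i ∈ Finset.Iio j, μ i • g i
      ∈ (Submodule.span ℝ (b '' {x : Fin n | (x : ℕ) < j.val}))ᗮ := by
    rw [hdiff, hspan]
    refine mem_orthogonal_span ?_
    rintro y ⟨x, hx, rfl⟩
    rw [inner_sum]
    refine Finset.sum_eq_zero fun i hi => ?_
    have hxi : x ≠ i := by
      have h1 : x < j := hx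
      have h2 : j ≤ i := (Finset.mem_Icc.1 hi).1
      exact ne_of_lt (lt_of_lt_of_le h1 h2)
    rw [real_inner_smul_right, gramSchmidt_orthogonal ℝ b hxi]
    ring
  have hproj : projPerp b j.val (b l) = ∑ i ∈ Finset.Icc j l, μ i • g i := by
    rw [projPerp]
    rw [show (Submodule.orthogonalProjection (Submodule.span ℝ (b '' {x : Fin n | (x : ℕ) < j.val})) (b l) : E) = _ from Submodule.eq_starProjection_of_mem_orthogonal hv horth]
    exact hdiff
  rw [hproj, norm_sq_orthosum b (Finset.Icc j l) μ]
  rw [← Finset.Ico_insert_right hjl, Finset.sum_insert (by simp)]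
  rw [hμl, bstar_eq_gs, one_pow, one_mul]
  congr 1
  refine Finset.sum_congr rfl fun i _ => ?_
  rw [hmu, bstar_eq_gs]

lemma insertFam_out {n : ℕ} {α : Type*} (b : Fin n → α) (k l i : Fin n)
    (h : i.val < k.val ∨ l.val < i.val) : insertFam b k l i = b i := if_pos h

lemma insertFam_at {n : ℕ} {α : Type*} (b : Fin n → α) (k l : Fin n)
    (hkl : k.val ≤ l.val) : insertFam b k l k = b l := by
  unfold insertFam
  rw [if_neg (by omega), if_pos rfl]

lemma insertFam_mid {n : ℕ} {α : Type*} (b : Fin n → α) (k l i : Fin n)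
    (h1 : k.val < i.val) (h2 : i.val ≤ l.val) :
    insertFam b k l i = b ⟨i.val - 1, lt_of_le_of_lt (Nat.sub_le _ _) i.isLt⟩ := by
  unfold insertFam
  rw [if_neg (by omega), if_neg (by simp only [Fin.ext_iff]; omega)]

lemma insertFam_self {n : ℕ} {α : Type*} (b : Fin n → α) (l : Fin n) :
    insertFam b l l = b := by
  funext i
  rcases lt_trichotomy i.val l.val with h | h | h
  · exact insertFam_out b l l i (Or.inl h)
  · have hi : i = l := Fin.ext h
    rw [hi, insertFam_at b l l le_rfl]
  · exact insertFam_out b l l i (Or.inr h)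

lemma insertFam_swap {n : ℕ} {α : Type*} (b : Fin n → α) (j l : Fin n)
    (hj : j < l) (hp : j.val + 1 < n) :
    insertFam b j l
      = insertFam b ⟨j.val + 1, hp⟩ l ∘ Equiv.swap ⟨j.val, j.isLt⟩ ⟨j.val + 1, hp⟩ := by
  have hjl : j.val < l.val := hj
  have hjeta : (⟨j.val, j.isLt⟩ : Fin n) = j := Fin.ext rfl
  set p : Fin n := ⟨j.val + 1, hp⟩ with hpdef
  have hpv : p.val = j.val + 1 := rfl
  funext i
  simp only [Function.comp_apply, hjeta]
  rcases lt_trichotomy i.val j.val with h | h | h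
  · rw [Equiv.swap_apply_of_ne_of_ne
      (by simp only [ne_eq, Fin.ext_iff]; omega)
      (by simp only [ne_eq, Fin.ext_iff, hpv]; omega),
      insertFam_out b j l i (Or.inl h), insertFam_out b p l i (Or.inl (by omega))]
  · have hi : i = j := Fin.ext h
    rw [hi, Equiv.swap_apply_left, insertFam_at b j l (le_of_lt hjl),
      insertFam_at b p l (by omega)]
  · by_cases hi : i = p
    · rw [hi, Equiv.swap_apply_right, insertFam_mid b j l p (by omega) (by omega),
        insertFam_out b p l j (Or.inl (by omega))]
      congr 1
    · have hiv : i.val ≠ j.val + 1 := fun hc => hi (Fin.ext (by rw [hpv]; exact hc))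
      rw [Equiv.swap_apply_of_ne_of_ne
        (by simp only [ne_eq, Fin.ext_iff]; omega)
        (by simp only [ne_eq, Fin.ext_iff, hpv]; omega)]
      rcases le_or_gt i.val l.val with hil | hil
      · rw [insertFam_mid b j l i (by omega) hil, insertFam_mid b p l i (by omega) hil]
      · rw [insertFam_out b j l i (Or.inr hil), insertFam_out b p l i (Or.inr hil)]

end Aux

/-- the quotients P_{j,ℓ} = Pot(σ_{j,ℓ}B)/Pot(B) satisfy P_{ℓ,ℓ} = 1 and
P_{j,ℓ} = P_{j+1,ℓ} · (‖b_ℓ^*‖² + ∑_{i=j}^{ℓ-1} μ_{ℓ,i}²‖b_i^*‖²)/‖b_j^*‖² for j < ℓ. -/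
theorem P_recursion {n m : ℕ} (b : Fin n → EuclideanSpace ℝ (Fin m))
    (hLI : LinearIndependent ℝ b) (l : Fin n) :
    Pot (insertFam b l l) / Pot b = 1 ∧
    ∀ j : Fin n, (hj : j < l) →
      Pot (insertFam b j l) / Pot b =
        (Pot (insertFam b ⟨j.val + 1, Nat.lt_of_le_of_lt (Nat.succ_le_of_lt hj) l.isLt⟩ l) / Pot b) *
          ((‖bstar b l‖ ^ 2 + ∑ i ∈ Finset.Ico j l, (mu b l i) ^ 2 * ‖bstar b i‖ ^ 2) /
            ‖bstar b j‖ ^ 2) := by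
  have hPb : Pot b ≠ 0 := by
    rw [Pot]
    refine Finset.prod_ne_zero_iff.2 fun i _ => ?_
    refine pow_ne_zero _ (norm_ne_zero_iff.2 ?_)
    rw [Aux.bstar_eq_gs]
    exact gramSchmidt_ne_zero i hLI
  constructor
  · rw [Aux.insertFam_self, div_self hPb]
  · intro j hj
    have hpn : j.val + 1 < n := lt_of_le_of_lt (Nat.succ_le_of_lt hj) l.isLt
    show Pot (insertFam b j l) / Pot b =
        (Pot (insertFam b ⟨j.val + 1, hpn⟩ l) / Pot b) *
          ((‖bstar b l‖ ^ 2 + ∑ i ∈ Finset.Ico j l, (mu b l i) ^ 2 * ‖bstar b i‖ ^ 2) /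
            ‖bstar b j‖ ^ 2)
    set C : Fin n → EuclideanSpace ℝ (Fin m) := insertFam b ⟨j.val + 1, hpn⟩ l with hC
    have hswap : insertFam b j l
        = C ∘ Equiv.swap ⟨j.val, j.isLt⟩ ⟨j.val + 1, hpn⟩ :=
      Aux.insertFam_swap b j l hj hpn
    have key : Pot (insertFam b j l) * ‖gramSchmidt ℝ C ⟨j.val, j.isLt⟩‖ ^ 2
        = Pot C * ‖gramSchmidt ℝ (insertFam b j l) ⟨j.val, j.isLt⟩‖ ^ 2 := by
      rw [hswap]
      exact Aux.Pot_swap C j.val hpn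
    have hjeta : (⟨j.val, j.isLt⟩ : Fin n) = j := rfl
    have hgsC : gramSchmidt ℝ C ⟨j.val, j.isLt⟩ = gramSchmidt ℝ b j := by
      rw [hjeta]
      refine Aux.gs_congr j fun x hx => ?_
      refine Aux.insertFam_out b _ l x (Or.inl (show x.val < j.val + 1 from ?_))
      have hxj : x.val ≤ j.val := hx
      omega
    have hgsC' : gramSchmidt ℝ (insertFam b j l) ⟨j.val, j.isLt⟩
        = projPerp b j.val (b l) := by
      rw [hjeta, Aux.gs_eq_sub_proj]
      have h1 : insertFam b j l j = b l := Aux.insertFam_at b j l (le_of_lt hj)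
      have h2 : insertFam b j l '' Set.Iio j = b '' Set.Iio j :=
        Set.image_congr fun x hx => Aux.insertFam_out b j l x (Or.inl hx)
      rw [h1, h2]
      rfl
    have hX := Aux.pyth b hLI j l (le_of_lt hj)
    rw [← hX, Aux.bstar_eq_gs b j]
    have hS : ‖gramSchmidt ℝ b j‖ ^ 2 ≠ 0 :=
      pow_ne_zero _ (norm_ne_zero_iff.2 (gramSchmidt_ne_zero j hLI))
    rw [hgsC, hgsC'] at key
    rw [div_mul_div_comm, ← key, mul_comm (Pot b) _]
    rw [mul_comm (Pot (insertFam b j l)) _]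
    rw [mul_div_mul_left _ _ hS]
end
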